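/- (Exact order of approximation) Under the hypotheses of the upper and lower estimates, if f analytic in D_R (R > q > p > 1) is not a polynomial of degree ≤ 1, then ‖L_{n,p,q}(f) - f‖_r ~ p^n/[n]_{p,q}, i.e., there exist constants 0 < c ≤ C (depending on f, r, r_1, p, q but not on n) with c·p^n/[n]_{p,q} ≤ ‖L_{n,p,q}(f) - f‖_r ≤ C·p^n/[n]_{p,q} for all n ∈ ℕ. -/

import Mathlib

/-- The `(p,q)`-integer `[n]_{p,q} = (q^n - p^n)/(q - p)`. -/
noncomputable def pqInt (p q : ℝ) (n : ℕ) : ℝ := (q ^ n - p ^ n) / (q - p)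

/-- The `(p,q)`-factorial `[n]_{p,q}! = [1]_{p,q}·[2]_{p,q}···[n]_{p,q}`. -/
noncomputable def pqFact (p q : ℝ) : ℕ → ℝ
  | 0 => 1
  | n + 1 => pqFact p q n * pqInt p q (n + 1)

/-- The `(p,q)`-binomial coefficient. -/
noncomputable def pqBinom (p q : ℝ) (n k : ℕ) : ℝ :=
  pqFact p q n / (pqFact p q k * pqFact p q (n - k))

/-- The `(p,q)`-derivative, with `D_{p,q}f(0) = f'(0)`. -/
noncomputable def pqDeriv (p q : ℝ) (f : ℂ → ℂ) (x : ℂ) : ℂ :=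
  if x = 0 then deriv f 0 else (f ((p : ℂ) * x) - f ((q : ℂ) * x)) / (((p : ℂ) - q) * x)

/-- Iterated `(p,q)`-derivative `D_{p,q}^{(k)}`. -/
noncomputable def pqDerivIter (p q : ℝ) : ℕ → (ℂ → ℂ) → (ℂ → ℂ)
  | 0, f => f
  | k + 1, f => pqDeriv p q (pqDerivIter p q k f)

/-- The complex `(p,q)`-Lorentz polynomial
`L_{n,p,q}(f)(z) = Σ_{k=0}^{n} q^{k(k-1)/2} binom(n,k)_{p,q} (z/[n]_{p,q})^k D_{p,q}^{(k)}f(0)`. -/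
noncomputable def lorentz (p q : ℝ) (n : ℕ) (f : ℂ → ℂ) (z : ℂ) : ℂ :=
  ∑ k ∈ Finset.range (n + 1),
    (q : ℂ) ^ (k * (k - 1) / 2) * (pqBinom p q n k : ℂ) *
      (z / (pqInt p q n : ℂ)) ^ k * pqDerivIter p q k f 0

/-- `‖g‖_r = max_{|z| ≤ r} |g(z)|`. -/
noncomputable def supNorm (r : ℝ) (g : ℂ → ℂ) : ℝ :=
  sSup ((fun z => ‖g z‖) '' Metric.closedBall (0 : ℂ) r)


open FormalMultilinearSeries Metric

lemma aux_norm_ofScalars (a : ℕ → ℂ) (n : ℕ) : ‖ofScalars ℂ a n‖ = ‖a n‖ := by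
  rw [ofScalars_norm]

lemma aux_hasFPSOB {a : ℕ → ℂ} {g : ℂ → ℂ} {ρ : ℝ} (hρ : 0 < ρ)
    (h : ∀ z : ℂ, ‖z‖ < ρ → HasSum (fun m => a m * z ^ m) (g z)) :
    HasFPowerSeriesOnBall g (ofScalars ℂ a) 0 (ENNReal.ofReal ρ) := by
  constructor
  · apply ENNReal.le_of_forall_nnreal_lt
    intro t ht
    have ht' : (t : ℝ) < ρ := by simpa using (ENNReal.lt_ofReal_iff_toReal_lt (by simp)).1 ht
    have hs : Summable (fun m => a m * (t : ℂ) ^ m) := by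
      refine (h ((t : ℝ) : ℂ) ?_).summable
      simpa using lt_of_le_of_lt (le_abs_self _) (by rwa [abs_of_nonneg t.coe_nonneg])
    refine (ofScalars ℂ a).le_radius_of_tendsto (l := 0) ?_
    have := hs.tendsto_atTop_zero.norm
    simp only [norm_mul, norm_pow, Complex.norm_real, Real.norm_eq_abs,
      abs_of_nonneg t.coe_nonneg, norm_zero] at this
    simpa only [aux_norm_ofScalars] using this
  · exact ENNReal.ofReal_pos.2 hρ
  · intro y hy
    simp only [EMetric.mem_ball, edist_zero_right] at hy
    have hy' : ‖y‖ < ρ := by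
      rw [← ofReal_norm] at hy
      exact (ENNReal.ofReal_lt_ofReal_iff hρ).1 hy
    have := h y hy'
    simp only [zero_add]
    convert this using 2 with n
    · rfl
    rw [ofScalars_apply_eq]
    simp [smul_eq_mul]

lemma aux_deriv_zero {a : ℕ → ℂ} {g : ℂ → ℂ} {ρ : ℝ} (hρ : 0 < ρ)
    (h : ∀ z : ℂ, ‖z‖ < ρ → HasSum (fun m => a m * z ^ m) (g z)) :
    deriv g 0 = a 1 := by
  have hd := (aux_hasFPSOB hρ h).hasFPowerSeriesAt.deriv
  rw [hd]
  have := ofScalars_apply_eq (𝕜 := ℂ) (E := ℂ) a 1 1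
  simpa [smul_eq_mul] using this


lemma aux_mem_cb {r : ℝ} {z : ℂ} : z ∈ closedBall (0 : ℂ) r ↔ ‖z‖ ≤ r := by
  simp [Complex.dist_eq]

lemma aux_supNorm_le {g : ℂ → ℂ} {r C : ℝ} (hC : 0 ≤ C)
    (h : ∀ z : ℂ, ‖z‖ ≤ r → ‖g z‖ ≤ C) : supNorm r g ≤ C := by
  refine Real.sSup_le ?_ hC
  rintro x ⟨z, hz, rfl⟩
  exact h z (aux_mem_cb.1 hz)

lemma aux_le_supNorm {g : ℂ → ℂ} {r : ℝ} (hbdd : BddAbove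
    ((fun z => ‖g z‖) '' Metric.closedBall (0 : ℂ) r))
    {z : ℂ} (hz : ‖z‖ ≤ r) : ‖g z‖ ≤ supNorm r g := by
  have := le_csSup hbdd ⟨z, aux_mem_cb.2 hz, rfl⟩
  exact this

lemma aux_bddAbove {g : ℂ → ℂ} {r : ℝ} (hg : ContinuousOn g (closedBall (0:ℂ) r)) :
    BddAbove ((fun z => ‖g z‖) '' Metric.closedBall (0 : ℂ) r) := by
  have : (fun z => ‖g z‖) = fun z => ‖g z‖ := by
    ext z; rfl
  rw [this]
  exact (isCompact_closedBall _ _).bddAbove_image hg.norm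

lemma aux_coeff_le {a : ℕ → ℂ} {g : ℂ → ℂ} {r ρ : ℝ} (hr : 0 < r) (hrρ : r < ρ)
    (h : ∀ z : ℂ, ‖z‖ < ρ → HasSum (fun m => a m * z ^ m) (g z)) (k : ℕ) :
    ‖a k‖ * r ^ k ≤ supNorm r g := by
  have hρ : 0 < ρ := hr.trans hrρ
  have hball := aux_hasFPSOB hρ h
  have hmem : ∀ x : ℂ, ‖x‖ ≤ r → x ∈ Metric.eball (0:ℂ) (ENNReal.ofReal ρ) := by
    intro x hx
    simp only [Metric.mem_eball, edist_zero_right, ← ofReal_norm]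
    exact (ENNReal.ofReal_lt_ofReal_iff hρ).2 (lt_of_le_of_lt hx hrρ)
  have hcont : ContinuousOn g (closedBall (0:ℂ) r) := fun x hx =>
    ((hball.analyticAt_of_mem (hmem x (aux_mem_cb.1 hx))).continuousAt).continuousWithinAt
  have hdiff : DifferentiableOn ℂ g (closedBall (0:ℂ) (r.toNNReal : ℝ)) := by
    intro x hx
    rw [Real.coe_toNNReal _ hr.le] at hx
    exact ((hball.analyticAt_of_mem (hmem x (aux_mem_cb.1 hx))).differentiableAt).differentiableWithinAt
  have hc := hdiff.hasFPowerSeriesOnBall (by simpa using hr)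
  rw [Real.coe_toNNReal _ hr.le] at hc
  have heq : ofScalars ℂ a = cauchyPowerSeries g 0 r :=
    hball.hasFPowerSeriesAt.eq_formalMultilinearSeries hc.hasFPowerSeriesAt
  -- sup norm facts
  set S := supNorm r g with hS
  have hbdd := aux_bddAbove hcont
  have hptS : ∀ θ : ℝ, ‖g (circleMap 0 r θ)‖ ≤ S := by
    intro θ
    refine aux_le_supNorm hbdd ?_
    simp [abs_of_nonneg hr.le]
  have hS0 : 0 ≤ S := le_trans (norm_nonneg _) (hptS 0)
  -- integral bound
  have hcm : Continuous fun θ : ℝ => ‖g (circleMap 0 r θ)‖ := by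
    refine (hcont.comp_continuous (continuous_circleMap 0 r) ?_).norm
    intro θ
    exact aux_mem_cb.2 (by simp [abs_of_nonneg hr.le])
  have hint : (∫ θ : ℝ in (0)..2 * Real.pi, ‖g (circleMap 0 r θ)‖) ≤ 2 * Real.pi * S := by
    have := intervalIntegral.integral_mono_on (a := 0) (b := 2 * Real.pi)
      (μ := MeasureTheory.volume) Real.two_pi_pos.le
      (hcm.intervalIntegrable 0 (2 * Real.pi))
      ((continuous_const (y := S)).intervalIntegrable 0 (2 * Real.pi))
      (fun x _ => hptS x)
    simpa using this
  have hnormle : ‖a k‖ ≤ ((2 * Real.pi)⁻¹ * ∫ θ : ℝ in (0)..2 * Real.pi,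
      ‖g (circleMap 0 r θ)‖) * |r|⁻¹ ^ k := by
    rw [← ofScalars_norm (E := ℂ) a, heq]
    exact norm_cauchyPowerSeries_le g 0 r k
  have habs : |r| = r := abs_of_nonneg hr.le
  have h2pi : (0:ℝ) < 2 * Real.pi := Real.two_pi_pos
  calc ‖a k‖ * r ^ k ≤ (((2 * Real.pi)⁻¹ * ∫ θ : ℝ in (0)..2 * Real.pi,
        ‖g (circleMap 0 r θ)‖) * |r|⁻¹ ^ k) * r ^ k := by
        exact mul_le_mul_of_nonneg_right hnormle (by positivity)
    _ ≤ (((2 * Real.pi)⁻¹ * (2 * Real.pi * S)) * |r|⁻¹ ^ k) * r ^ k := by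
        have : (0:ℝ) ≤ |r|⁻¹ ^ k := by positivity
        have h1 : ((2 * Real.pi)⁻¹ * ∫ θ : ℝ in (0)..2 * Real.pi, ‖g (circleMap 0 r θ)‖)
            ≤ (2 * Real.pi)⁻¹ * (2 * Real.pi * S) :=
          mul_le_mul_of_nonneg_left hint (by positivity)
        exact mul_le_mul_of_nonneg_right (mul_le_mul_of_nonneg_right h1 this) (by positivity)
    _ = S := by
        rw [habs, inv_mul_cancel_left₀ h2pi.ne']
        rw [mul_assoc, ← mul_pow, inv_mul_cancel₀ hr.ne', one_pow, mul_one]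


section pq
variable {p q : ℝ} (hp : 1 < p) (hpq : p < q)

include hp hpq

lemma pq_pow_lt {n : ℕ} (hn : 1 ≤ n) : p ^ n < q ^ n :=
  pow_lt_pow_left₀ hpq (by linarith) (by omega)

lemma pqInt_pos {n : ℕ} (hn : 1 ≤ n) : 0 < pqInt p q n := by
  have := pq_pow_lt hp hpq hn
  have : 0 < q ^ n - p ^ n := by linarith
  exact div_pos this (by linarith)

lemma pqFact_pos (n : ℕ) : 0 < pqFact p q n := by
  induction n with
  | zero => norm_num [pqFact]
  | succ k ih => exact mul_pos ih (pqInt_pos hp hpq (by omega))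

lemma pqInt_ge {n : ℕ} (hn : 1 ≤ n) : q ^ (n - 1) ≤ pqInt p q n := by
  rw [pqInt, le_div_iff₀ (by linarith)]
  have h1 : q ^ (n-1) * (q - p) = q ^ n - q ^ (n-1) * p := by
    rw [mul_sub]
    congr 1
    rw [← pow_succ]
    congr 1
    omega
  rw [h1]
  have h2 : p ^ n ≤ q ^ (n-1) * p := by
    have : p ^ n = p ^ (n-1) * p := by rw [← pow_succ]; congr 1; omega
    rw [this]
    have : p ^ (n-1) ≤ q ^ (n-1) := pow_le_pow_left₀ (by linarith) hpq.le _
    nlinarith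
  linarith

lemma pq_an_le {n : ℕ} (hn : 1 ≤ n) : p ^ n / pqInt p q n ≤ p := by
  rw [div_le_iff₀ (pqInt_pos hp hpq hn)]
  have h1 : q ^ (n-1) ≤ pqInt p q n := pqInt_ge hp hpq hn
  have h2 : p ^ (n-1) ≤ q ^ (n-1) := pow_le_pow_left₀ (by linarith) hpq.le _
  have h3 : p ^ n = p * p ^ (n-1) := by rw [← pow_succ']; congr 1; omega
  nlinarith

end pq

noncomputable def pqB (p q : ℝ) (n k : ℕ) : ℝ :=
  q ^ (k * (k - 1) / 2) * pqBinom p q n k * pqFact p q k / pqInt p q n ^ k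

noncomputable def pqE (p q : ℝ) (n j : ℕ) : ℝ := q ^ j * pqInt p q (n - j) / pqInt p q n

section pq2
variable {p q : ℝ} (hp : 1 < p) (hpq : p < q)

lemma pqFact_sub {n k : ℕ} (hk : k ≤ n) :
    pqFact p q n = pqFact p q (n - k) * ∏ j ∈ Finset.range k, pqInt p q (n - j) := by
  induction k with
  | zero => simp
  | succ m ih =>
    rw [ih (by omega)]
    have h1 : n - m = (n - (m+1)) + 1 := by omega
    have h2 : pqFact p q (n - m) = pqFact p q (n - (m+1)) * pqInt p q (n - m) := by
      rw [h1, pqFact, ← h1]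
    rw [h2, Finset.prod_range_succ]
    ring

include hp hpq

lemma pqB_prod {n k : ℕ} (hk : k ≤ n) :
    pqB p q n k = ∏ j ∈ Finset.range k, pqE p q n j := by
  have hfk := pqFact_pos hp hpq k
  have hfnk := pqFact_pos hp hpq (n - k)
  have hpow : (q : ℝ) ^ (k * (k - 1) / 2) = ∏ j ∈ Finset.range k, q ^ j := by
    rw [Finset.prod_pow_eq_pow_sum, Finset.sum_range_id]
  have hbin : pqBinom p q n k * pqFact p q k = ∏ j ∈ Finset.range k, pqInt p q (n - j) := by
    rw [pqBinom, pqFact_sub (p := p) (q := q) hk]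
    field_simp
  simp only [pqB, pqE]
  rw [Finset.prod_div_distrib, Finset.prod_mul_distrib, Finset.prod_const,
    Finset.card_range, ← hpow, ← hbin]
  ring

lemma pqE_pos {n j : ℕ} (hj : j < n) : 0 < pqE p q n j := by
  have h1 := pqInt_pos hp hpq (n := n - j) (by omega)
  have h2 := pqInt_pos hp hpq (n := n) (by omega)
  have hq0 : (0:ℝ) < q := by linarith
  exact div_pos (mul_pos (pow_pos hq0 j) h1) h2

lemma pqE_le_one {n j : ℕ} (hj : j < n) : pqE p q n j ≤ 1 := by
  have h2 := pqInt_pos hp hpq (n := n) (by omega)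
  rw [pqE, div_le_one h2, pqInt, pqInt]
  have hqp : (0:ℝ) < q - p := by linarith
  rw [← mul_div_assoc, div_le_div_iff₀ hqp hqp]
  have hqq : q ^ j * q ^ (n - j) = q ^ n := by rw [← pow_add]; congr 1; omega
  have hpp : p ^ j * p ^ (n - j) = p ^ n := by rw [← pow_add]; congr 1; omega
  have hple : p ^ j ≤ q ^ j := pow_le_pow_left₀ (by linarith) hpq.le _
  have hpnj : (0:ℝ) < p ^ (n - j) := pow_pos (by linarith) _
  nlinarith [mul_le_mul_of_nonneg_right hple hpnj.le, mul_pos hqp hpnj]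

lemma pqE_one_sub {n j : ℕ} (hj : j < n) :
    1 - pqE p q n j = (q ^ j * p ^ (n - j) - p ^ n) / (q ^ n - p ^ n) := by
  have h2 := pqInt_pos hp hpq (n := n) (by omega)
  have hqp : (0:ℝ) < q - p := by linarith
  have hqn : (0:ℝ) < q ^ n - p ^ n := by
    have := pq_pow_lt hp hpq (n := n) (by omega); linarith
  have hqq : q ^ j * q ^ (n - j) = q ^ n := by rw [← pow_add]; congr 1; omega
  rw [pqE, pqInt, pqInt]
  field_simp
  nlinarith [hqq]

end pq2

lemma one_sub_prod_le_sum (s : Finset ℕ) (e : ℕ → ℝ) (h0 : ∀ j ∈ s, 0 ≤ e j)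
    (h1 : ∀ j ∈ s, e j ≤ 1) : 1 - ∏ j ∈ s, e j ≤ ∑ j ∈ s, (1 - e j) := by
  induction s using Finset.induction with
  | empty => simp
  | @insert a t hat ih =>
    rw [Finset.prod_insert hat, Finset.sum_insert hat]
    have hP0 : 0 ≤ ∏ j ∈ t, e j := Finset.prod_nonneg fun j hj => h0 j (Finset.mem_insert_of_mem hj)
    have hP1 : ∏ j ∈ t, e j ≤ 1 := Finset.prod_le_one
      (fun j hj => h0 j (Finset.mem_insert_of_mem hj))
      (fun j hj => h1 j (Finset.mem_insert_of_mem hj))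
    have hih := ih (fun j hj => h0 j (Finset.mem_insert_of_mem hj))
      (fun j hj => h1 j (Finset.mem_insert_of_mem hj))
    have ha0 := h0 a (Finset.mem_insert_self a t)
    have ha1 := h1 a (Finset.mem_insert_self a t)
    nlinarith

section pq3
variable {p q : ℝ} (hp : 1 < p) (hpq : p < q)
include hp hpq

lemma pqB_pos {n k : ℕ} (hk : k ≤ n) : 0 < pqB p q n k := by
  rw [pqB_prod hp hpq hk]
  exact Finset.prod_pos fun j hj => pqE_pos hp hpq (by
    have := Finset.mem_range.1 hj; omega)

lemma pqB_le_one {n k : ℕ} (hk : k ≤ n) : pqB p q n k ≤ 1 := by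
  rw [pqB_prod hp hpq hk]
  exact Finset.prod_le_one
    (fun j hj => (pqE_pos hp hpq (by have := Finset.mem_range.1 hj; omega)).le)
    (fun j hj => pqE_le_one hp hpq (by have := Finset.mem_range.1 hj; omega))

lemma pqB_one {n : ℕ} (hn : 1 ≤ n) : pqB p q n 1 = 1 := by
  rw [pqB_prod hp hpq hn]
  rw [Finset.prod_range_one, pqE]
  simp only [Nat.sub_zero, pow_zero, one_mul]
  exact div_self (pqInt_pos hp hpq hn).ne'

lemma pqB_one_sub_le {n k : ℕ} (hn : 1 ≤ n) (hk : k ≤ n) :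
    1 - pqB p q n k ≤ (p / (q-p)^2) * (q/p)^k * (p ^ n / pqInt p q n) := by
  have hp0 : (0:ℝ) < p := by linarith
  have hqp : (0:ℝ) < q - p := by linarith
  have hqn : (0:ℝ) < q ^ n - p ^ n := by
    have := pq_pow_lt hp hpq hn; linarith
  have hIn := pqInt_pos hp hpq hn
  rw [pqB_prod hp hpq hk]
  have step1 : 1 - ∏ j ∈ Finset.range k, pqE p q n j ≤
      ∑ j ∈ Finset.range k, (1 - pqE p q n j) :=
    one_sub_prod_le_sum _ _
      (fun j hj => (pqE_pos hp hpq (by have := Finset.mem_range.1 hj; omega)).le)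
      (fun j hj => pqE_le_one hp hpq (by have := Finset.mem_range.1 hj; omega))
  have step2 : ∑ j ∈ Finset.range k, (1 - pqE p q n j) ≤
      ∑ j ∈ Finset.range k, (q/p)^j * (p ^ n / (q ^ n - p ^ n)) := by
    refine Finset.sum_le_sum fun j hj => ?_
    have hjn : j < n := by have := Finset.mem_range.1 hj; omega
    rw [pqE_one_sub hp hpq hjn]
    have hpp : p ^ (n-j) * p ^ j = p ^ n := by rw [← pow_add]; congr 1; omega
    have hterm : (q/p)^j * (p ^ n / (q ^ n - p ^ n)) = q^j * p^(n-j) / (q ^ n - p ^ n) := by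
      rw [div_pow, div_mul_div_comm, div_eq_div_iff (by positivity) hqn.ne']
      linear_combination (-(q ^ j) * (q ^ n - p ^ n)) * hpp
    rw [hterm, div_le_div_iff₀ hqn hqn]
    nlinarith [mul_pos (pow_pos hp0 n) hqn]
  have step3 : ∑ j ∈ Finset.range k, ((q/p):ℝ)^j ≤ (q/p)^k * (p/(q-p)) := by
    have ht1 : (1:ℝ) < q / p := (one_lt_div hp0).2 hpq
    have := geom_sum_eq (ht1.ne') k
    rw [this]
    rw [div_le_iff₀ (by linarith)]
    have hqp1 : q / p - 1 = (q-p)/p := by field_simp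
    rw [hqp1]
    have : (q/p)^k * (p/(q-p)) * ((q-p)/p) = (q/p)^k := by
      field_simp
    rw [this]
    linarith [pow_pos (lt_trans one_pos ht1) k]
  have hrw : p ^ n / (q ^ n - p ^ n) = (p ^ n / pqInt p q n) * (1/(q-p)) := by
    rw [pqInt]
    field_simp
  calc 1 - ∏ j ∈ Finset.range k, pqE p q n j
      ≤ ∑ j ∈ Finset.range k, (q/p)^j * (p ^ n / (q ^ n - p ^ n)) := step1.trans step2
    _ = (∑ j ∈ Finset.range k, ((q/p):ℝ)^j) * (p ^ n / (q ^ n - p ^ n)) := by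
        rw [Finset.sum_mul]
    _ ≤ (q/p)^k * (p/(q-p)) * (p ^ n / (q ^ n - p ^ n)) := by
        apply mul_le_mul_of_nonneg_right step3
        positivity
    _ = (p / (q-p)^2) * (q/p)^k * (p ^ n / pqInt p q n) := by
        rw [hrw]
        field_simp

lemma pqB_one_sub_ge {n k : ℕ} (hk2 : 2 ≤ k) (hk : k ≤ n) :
    (p ^ n / pqInt p q n) / p ≤ 1 - pqB p q n k := by
  have hp0 : (0:ℝ) < p := by linarith
  have hn2 : 2 ≤ n := le_trans hk2 hk
  have hIn := pqInt_pos hp hpq (n := n) (by omega)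
  have h1n : 1 < n := by omega
  have hBe : pqB p q n k ≤ pqE p q n 1 := by
    rw [pqB_prod hp hpq hk]
    have h1mem : 1 ∈ Finset.range k := Finset.mem_range.2 (by omega)
    rw [← Finset.mul_prod_erase _ _ h1mem]
    have hprod : ∏ j ∈ (Finset.range k).erase 1, pqE p q n j ≤ 1 :=
      Finset.prod_le_one
        (fun j hj => (pqE_pos hp hpq (by
          have := Finset.mem_range.1 (Finset.mem_of_mem_erase hj); omega)).le)
        (fun j hj => pqE_le_one hp hpq (by
          have := Finset.mem_range.1 (Finset.mem_of_mem_erase hj); omega))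
    have hE1 := pqE_pos hp hpq (p := p) (q := q) (n := n) (j := 1) (by omega)
    nlinarith
  have hval : (p ^ n / pqInt p q n) / p = 1 - pqE p q n 1 := by
    rw [pqE_one_sub hp hpq h1n]
    have hqn : (0:ℝ) < q ^ n - p ^ n := by
      have := pq_pow_lt hp hpq (n := n) (by omega); linarith
    rw [pqInt]
    have hqp : (0:ℝ) < q - p := by linarith
    have h3 : p ^ n = p ^ (n-1) * p := by rw [← pow_succ]; congr 1; omega
    have h4 : q ^ 1 * p ^ (n-1) - p ^ n = p ^ (n-1) * (q - p) := by
      rw [h3]; ring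
    rw [h4]
    field_simp
    rw [h3]
    ring
  linarith [hval, hBe]

end pq3


noncomputable def cInt (p q : ℝ) (m : ℕ) : ℂ := ((q:ℂ)^m - (p:ℂ)^m)/((q:ℂ) - (p:ℂ))
noncomputable def cPi (p q : ℝ) (k m : ℕ) : ℂ := ∏ i ∈ Finset.range k, cInt p q (m + i + 1)

section main
variable {R p q : ℝ} {f : ℂ → ℂ} {c : ℕ → ℂ}

lemma cInt_one (hpq : p < q) : cInt p q 1 = 1 := by
  have : ((q:ℂ) - (p:ℂ)) ≠ 0 := by
    rw [sub_ne_zero]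
    exact_mod_cast (hpq.ne')
  simp [cInt, div_self this]

lemma pqInt_cast (m : ℕ) : ((pqInt p q m : ℝ) : ℂ) = cInt p q m := by
  rw [pqInt, cInt]; push_cast; ring

lemma pqFact_eq_prod (n : ℕ) : pqFact p q n = ∏ i ∈ Finset.range n, pqInt p q (i+1) := by
  induction n with
  | zero => simp [pqFact]
  | succ m ih => rw [pqFact, ih, Finset.prod_range_succ]

lemma cPi_fact (k : ℕ) : cPi p q k 0 = ((pqFact p q k : ℝ) : ℂ) := by
  rw [pqFact_eq_prod, cPi]
  push_cast
  refine Finset.prod_congr rfl fun i _ => ?_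
  rw [pqInt_cast]
  norm_num

variable (hp : 1 < p) (hpq : p < q)
  (hf : ∀ z : ℂ, ‖z‖ < R → HasSum (fun k => c k * z ^ k) (f z))
include hp hpq hf

lemma pqDerivIter_hasSum (k : ℕ) : ∀ z : ℂ, ‖z‖ < R / q^k →
    HasSum (fun m => cPi p q k m * c (m+k) * z^m) (pqDerivIter p q k f z) := by
  have hq0 : (0:ℝ) < q := by linarith
  have hcpq : ((p:ℂ) - (q:ℂ)) ≠ 0 := by
    rw [sub_ne_zero]; exact_mod_cast hpq.ne
  have hcqp : ((q:ℂ) - (p:ℂ)) ≠ 0 := by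
    rw [sub_ne_zero]; exact_mod_cast hpq.ne'
  induction k with
  | zero =>
    intro z hz
    simp only [pow_zero, div_one] at hz
    have := hf z hz
    simpa [pqDerivIter, cPi] using this
  | succ k ih =>
    intro z hz
    have hRpos : 0 < R := by
      have h1 := lt_of_le_of_lt (norm_nonneg z) hz
      by_contra hc; push_neg at hc
      have : R / q^(k+1) ≤ 0 := div_nonpos_of_nonpos_of_nonneg hc (pow_pos hq0 _).le
      linarith
    have hρk : 0 < R / q^k := div_pos hRpos (pow_pos hq0 k)
    by_cases hz0 : z = 0
    · subst hz0
      have hder : pqDerivIter p q (k+1) f 0 = cPi p q k 1 * c (1+k) := by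
        show pqDeriv p q (pqDerivIter p q k f) 0 = _
        rw [pqDeriv, if_pos rfl]
        exact aux_deriv_zero hρk ih
      have hsingle : HasSum (fun m => cPi p q (k+1) m * c (m+(k+1)) * (0:ℂ)^m)
          (cPi p q (k+1) 0 * c (0+(k+1)) * (0:ℂ)^0) :=
        hasSum_single 0 (fun m hm => by simp [zero_pow hm])
      have hval : cPi p q (k+1) 0 * c (0+(k+1)) * (0:ℂ)^0 = cPi p q k 1 * c (1+k) := by
        rw [pow_zero, mul_one]
        congr 1
        · rw [cPi, cPi, Finset.prod_range_succ']
          have h1 : cInt p q (0 + 0 + 1) = 1 := by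
            rw [show (0+0+1 : ℕ) = 1 from rfl]
            exact cInt_one hpq
          rw [h1, mul_one]
          refine Finset.prod_congr rfl fun i _ => ?_
          congr 1
          omega
        · congr 1
          omega
      rw [hder]
      exact hval ▸ hsingle
    · have hqz : ‖(q:ℂ) * z‖ < R / q^k := by
        rw [norm_mul, Complex.norm_real, Real.norm_eq_abs, abs_of_pos hq0]
        have h2 : q * ‖z‖ < q * (R / q^(k+1)) := mul_lt_mul_of_pos_left hz hq0
        have h3 : q * (R / q^(k+1)) = R / q^k := by
          rw [pow_succ, ← div_div]
          field_simp
        linarith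
      have hpz : ‖(p:ℂ) * z‖ < R / q^k := by
        rw [norm_mul, Complex.norm_real, Real.norm_eq_abs, abs_of_pos (by linarith : (0:ℝ) < p)]
        have h2 : p * ‖z‖ < p * (R / q^(k+1)) := mul_lt_mul_of_pos_left hz (by linarith)
        have h3 : p * (R / q^(k+1)) ≤ q * (R / q^(k+1)) :=
          mul_le_mul_of_nonneg_right hpq.le (by positivity)
        have h4 : q * (R / q^(k+1)) = R / q^k := by
          rw [pow_succ, ← div_div]; field_simp
        linarith
      have hA := ih _ hpz
      have hB := ih _ hqz
      have hC := (hA.sub hB).div_const (((p:ℂ) - q) * z)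
      have hval : pqDerivIter p q (k+1) f z =
          (pqDerivIter p q k f ((p:ℂ)*z) - pqDerivIter p q k f ((q:ℂ)*z)) / (((p:ℂ) - q) * z) := by
        show pqDeriv p q (pqDerivIter p q k f) z = _
        rw [pqDeriv, if_neg hz0]
      rw [hval]
      set F : ℕ → ℂ := fun m => (cPi p q k m * c (m+k) * ((p:ℂ)*z)^m
        - cPi p q k m * c (m+k) * ((q:ℂ)*z)^m) / (((p:ℂ) - q) * z) with hF
      have hF0 : F 0 = 0 := by simp [hF]
      have hshift : HasSum (fun m => F (m+1))
          ((pqDerivIter p q k f ((p:ℂ)*z) - pqDerivIter p q k f ((q:ℂ)*z)) / (((p:ℂ) - q) * z)) := by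
        rw [hasSum_nat_add_iff 1]
        simpa [hF0] using hC
      have hfun : (fun m => F (m+1)) = fun m => cPi p q (k+1) m * c (m+(k+1)) * z^m := by
        funext m
        have hP : cPi p q (k+1) m = cPi p q k (m+1) * cInt p q (m+1) := by
          rw [cPi, cPi, Finset.prod_range_succ']
          congr 1
          · refine Finset.prod_congr rfl fun i _ => ?_
            congr 1
            omega
        have hidx : m + 1 + k = m + (k+1) := by omega
        rw [hF]
        simp only
        rw [hidx, hP, cInt]
        have hzne : z ≠ 0 := hz0
        field_simp
        ring
      rw [← hfun]
      exact hshift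

lemma pqDerivIter_zero (hq0 : 0 < R) (k : ℕ) :
    pqDerivIter p q k f 0 = ((pqFact p q k : ℝ) : ℂ) * c k := by
  have hqq : (0:ℝ) < q := by linarith
  have h0 : ‖(0:ℂ)‖ < R / q^k := by
    simpa using div_pos hq0 (pow_pos hqq k)
  have h1 := pqDerivIter_hasSum hp hpq hf k 0 h0
  have h2 : HasSum (fun m => cPi p q k m * c (m+k) * (0:ℂ)^m)
      (cPi p q k 0 * c (0+k) * (0:ℂ)^0) :=
    hasSum_single 0 (fun m hm => by simp [zero_pow hm])
  have := h1.unique h2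
  rw [this, cPi_fact]
  simp

end main


noncomputable def pqBe (p q : ℝ) (n k : ℕ) : ℝ := if k ≤ n then pqB p q n k else 0

section final
variable {R p q : ℝ} {f : ℂ → ℂ} {c : ℕ → ℂ}
variable (hp : 1 < p) (hpq : p < q)
  (hf : ∀ z : ℂ, ‖z‖ < R → HasSum (fun k => c k * z ^ k) (f z))
include hp hpq hf

lemma lorentz_eq (hR0 : 0 < R) {n : ℕ} (hn : 1 ≤ n) (z : ℂ) :
    lorentz p q n f z = ∑ k ∈ Finset.range (n+1), ((pqB p q n k : ℝ) : ℂ) * (c k * z ^ k) := by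
  have hIc : ((pqInt p q n : ℝ) : ℂ) ≠ 0 := by
    exact_mod_cast (pqInt_pos hp hpq hn).ne'
  rw [lorentz]
  refine Finset.sum_congr rfl fun k _ => ?_
  rw [pqDerivIter_zero hp hpq hf hR0 k, pqB]
  push_cast
  rw [div_pow]
  field_simp

lemma diff_hasSum (hR0 : 0 < R) {n : ℕ} (hn : 1 ≤ n) {z : ℂ} (hz : ‖z‖ < R) :
    HasSum (fun k => ((pqBe p q n k - 1 : ℝ) : ℂ) * c k * z ^ k)
      (lorentz p q n f z - f z) := by
  have h1 : HasSum (fun k => ((pqBe p q n k : ℝ) : ℂ) * (c k * z ^ k)) (lorentz p q n f z) := by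
    have h2 : ∀ b ∉ Finset.range (n+1), ((pqBe p q n b : ℝ) : ℂ) * (c b * z ^ b) = 0 := by
      intro b hb
      have : ¬ b ≤ n := by simpa [Nat.lt_succ_iff] using hb
      simp [pqBe, this]
    have h3 : HasSum _ _ := hasSum_sum_of_ne_finset_zero h2
    have h4 : ∑ b ∈ Finset.range (n+1), ((pqBe p q n b : ℝ) : ℂ) * (c b * z ^ b)
        = lorentz p q n f z := by
      rw [lorentz_eq hp hpq hf hR0 hn z]
      refine Finset.sum_congr rfl fun k hk => ?_
      have : k ≤ n := by simpa [Nat.lt_succ_iff] using hk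
      simp [pqBe, this]
    rwa [h4] at h3
  have h5 := h1.sub (hf z hz)
  have hfe : (fun k => ((pqBe p q n k - 1 : ℝ) : ℂ) * c k * z ^ k)
      = fun k => ((pqBe p q n k : ℝ) : ℂ) * (c k * z ^ k) - c k * z ^ k := by
    funext k
    push_cast
    ring
  rw [hfe]
  exact h5

end final


set_option maxHeartbeats 1000000 in
theorem lorentz_exact_order (R p q r r₁ : ℝ) (hp : 1 < p) (hpq : p < q) (hqR : q < R)
    (hr : 1 ≤ r) (hrr₁ : q ^ 3 * r < p ^ 3 * r₁) (hr₁R : q ^ 4 * r₁ < p ^ 4 * R)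
    (f : ℂ → ℂ) (c : ℕ → ℂ)
    (hf : ∀ z : ℂ, ‖z‖ < R → HasSum (fun k => c k * z ^ k) (f z))
    (hnotlin : ∃ k : ℕ, 2 ≤ k ∧ c k ≠ 0) :
    ∃ c₀ C : ℝ, 0 < c₀ ∧ c₀ ≤ C ∧ ∀ n : ℕ, 1 ≤ n →
      c₀ * (p ^ n / pqInt p q n) ≤ supNorm r (fun z => lorentz p q n f z - f z) ∧
      supNorm r (fun z => lorentz p q n f z - f z) ≤ C * (p ^ n / pqInt p q n) := by
  obtain ⟨k₀, hk₀2, hck₀⟩ := hnotlin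
  have hp0 : (0:ℝ) < p := by linarith
  have hq0 : (0:ℝ) < q := by linarith
  have hqp : (0:ℝ) < q - p := by linarith
  have hr0 : (0:ℝ) < r := by linarith
  have hR0 : (0:ℝ) < R := by linarith
  have hp3 : (0:ℝ) < p^3 := by positivity
  have hp4 : (0:ℝ) < p^4 := by positivity
  have hpq3 : p^3 ≤ q^3 := pow_le_pow_left₀ hp0.le hpq.le 3
  have hpq4 : p^4 ≤ q^4 := pow_le_pow_left₀ hp0.le hpq.le 4
  have hrr1 : r < r₁ := by
    have h1 : p^3 * r < p^3 * r₁ := by nlinarith [mul_le_mul_of_nonneg_right hpq3 hr0.le]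
    exact lt_of_mul_lt_mul_left h1 hp3.le
  have hr1pos : 0 < r₁ := hr0.trans hrr1
  have hr1R : r₁ < R := by
    have h1 : p^4 * r₁ < p^4 * R := by nlinarith [mul_le_mul_of_nonneg_right hpq4 hr1pos.le]
    exact lt_of_mul_lt_mul_left h1 hp4.le
  have hrR : r < R := hrr1.trans hr1R
  have hqrp : q * r < p * r₁ := by
    have h2 : p^2 * (q * r) < p^2 * (p * r₁) := by
      nlinarith [mul_le_mul_of_nonneg_right (pow_le_pow_left₀ hp0.le hpq.le 2)
        (mul_pos hq0 hr0).le]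
    exact lt_of_mul_lt_mul_left h2 (by positivity)
  have hs1r1 : q * r / p < r₁ := by rw [div_lt_iff₀ hp0]; nlinarith
  have hs1R : q * r / p < R := hs1r1.trans hr1R
  have hs1pos : 0 < q * r / p := by positivity
  set θ : ℝ := r / r₁ with hθdef
  have hθ0 : 0 ≤ θ := by positivity
  have hθpq : θ < p / q := by
    rw [hθdef, div_lt_div_iff₀ hr1pos hq0]
    nlinarith
  have hpq1 : p / q < 1 := by rw [div_lt_one hq0]; exact hpq
  have hθ1 : θ < 1 := hθpq.trans hpq1
  have h1θ : 0 < 1 - θ := by linarith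
  -- coefficient bound at r₁
  have hr1norm : ‖((r₁ : ℝ) : ℂ)‖ < R := by
    rw [Complex.norm_real, Real.norm_eq_abs, abs_of_pos hr1pos]; exact hr1R
  have hsumr1 : Summable (fun k => c k * ((r₁ : ℝ) : ℂ) ^ k) := (hf _ hr1norm).summable
  obtain ⟨K, hKmem⟩ := hsumr1.tendsto_atTop_zero.norm.bddAbove_range
  have hK : ∀ k, ‖c k‖ * r₁ ^ k ≤ K := by
    intro k
    have h1 : ‖c k * ((r₁ : ℝ) : ℂ) ^ k‖ ≤ K := hKmem (Set.mem_range_self k)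
    rwa [norm_mul, norm_pow, Complex.norm_real, Real.norm_eq_abs, abs_of_pos hr1pos] at h1
  have hK0 : 0 ≤ K := le_trans (by positivity) (hK 0)
  have hdom : ∀ s : ℝ, 0 ≤ s → ∀ k, ‖c k‖ * s ^ k ≤ K * (s / r₁) ^ k := by
    intro s hs k
    have h1 : s ^ k = r₁ ^ k * (s / r₁) ^ k := by
      rw [← mul_pow, mul_div_cancel₀ _ hr1pos.ne']
    calc ‖c k‖ * s ^ k = (‖c k‖ * r₁ ^ k) * (s / r₁) ^ k := by rw [h1]; ring
      _ ≤ K * (s / r₁) ^ k := mul_le_mul_of_nonneg_right (hK k) (by positivity)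
  -- summability at s₁ := q*r/p
  have hgeo1 : Summable (fun k : ℕ => K * ((q * r / p) / r₁) ^ k) :=
    (summable_geometric_of_lt_one (by positivity) (by
      rw [div_lt_one hr1pos]; exact hs1r1)).mul_left K
  have hS1sum : Summable (fun k => ‖c k‖ * (q * r / p) ^ k) :=
    Summable.of_nonneg_of_le (fun k => by positivity) (hdom _ hs1pos.le) hgeo1
  set S₁ : ℝ := ∑' k, ‖c k‖ * (q * r / p) ^ k with hS₁def
  have hS₁0 : 0 ≤ S₁ := tsum_nonneg (fun k => by positivity)
  set M : ℝ := p / (q - p)^2 with hMdef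
  have hM0 : 0 ≤ M := by positivity
  set Ctail : ℝ := K / ((1 - θ) * (q - p)) with hCtaildef
  have hCtail0 : 0 ≤ Ctail := by positivity
  set Cup : ℝ := M * S₁ + Ctail with hCupdef
  have hCup0 : 0 ≤ Cup := by positivity
  set c₀ : ℝ := ‖c k₀‖ / p with hc₀def
  have hc₀pos : 0 < c₀ := div_pos (norm_pos_iff.2 hck₀) hp0
  refine ⟨c₀, max Cup c₀, hc₀pos, le_max_right _ _, ?_⟩
  intro n hn
  have hIn : 0 < pqInt p q n := pqInt_pos hp hpq hn
  set an : ℝ := p ^ n / pqInt p q n with handef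
  have han0 : 0 < an := div_pos (pow_pos hp0 n) hIn
  -- geometric tail summability at r
  have hgeor : Summable (fun k : ℕ => K * θ ^ k) :=
    (summable_geometric_of_lt_one hθ0 hθ1).mul_left K
  have hvsum : Summable (fun k => if k ≤ n then (0:ℝ) else ‖c k‖ * r ^ k) := by
    refine Summable.of_nonneg_of_le (fun k => by positivity) (fun k => ?_) hgeor
    by_cases hkn : k ≤ n
    · simp only [if_pos hkn]
      positivity
    · simp only [if_neg hkn]
      exact hdom r hr0.le k
  -- an lower bound:  (q-p) * (p/q)^n ≤ an
  have hanlow : (p / q) ^ n ≤ an / (q - p) := by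
    have h1 : pqInt p q n ≤ q ^ n / (q - p) := by
      rw [pqInt, div_le_div_iff₀ hqp hqp]
      nlinarith [mul_pos (pow_pos hp0 n) hqp]
    have h2 : p ^ n / (q ^ n / (q - p)) ≤ an := by
      rw [handef]
      exact div_le_div_of_nonneg_left (pow_pos hp0 n).le hIn h1
    have h3 : p ^ n / (q ^ n / (q - p)) = (p / q) ^ n * (q - p) := by
      rw [div_pow]
      field_simp
    rw [le_div_iff₀ hqp]
    rw [h3] at h2
    linarith
  constructor
  · -- LOWER BOUND
    have hco := aux_coeff_le (a := fun k => ((pqBe p q n k - 1 : ℝ) : ℂ) * c k)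
      (g := fun z => lorentz p q n f z - f z) hr0 hrR
      (fun z hz => diff_hasSum hp hpq hf hR0 hn hz) k₀
    have h1 : ‖((pqBe p q n k₀ - 1 : ℝ) : ℂ) * c k₀‖ = |pqBe p q n k₀ - 1| * ‖c k₀‖ := by
      rw [norm_mul, Complex.norm_real, Real.norm_eq_abs]
    have h2 : an / p ≤ |pqBe p q n k₀ - 1| := by
      by_cases hk : k₀ ≤ n
      · rw [pqBe, if_pos hk, abs_sub_comm,
          abs_of_nonneg (by linarith [pqB_le_one hp hpq hk] : (0:ℝ) ≤ 1 - pqB p q n k₀)]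
        exact pqB_one_sub_ge hp hpq hk₀2 hk
      · rw [pqBe, if_neg hk]
        have h3 : an ≤ p := pq_an_le hp hpq hn
        rw [abs_sub_comm, abs_of_nonneg (by norm_num : (0:ℝ) ≤ 1 - 0)]
        rw [div_le_iff₀ hp0]
        linarith
    have h3 : 1 ≤ r ^ k₀ := by
      have := pow_le_pow_left₀ (by norm_num : (0:ℝ) ≤ 1) hr k₀
      simpa using this
    calc c₀ * an = (an / p) * ‖c k₀‖ * 1 := by rw [hc₀def]; ring
      _ ≤ |pqBe p q n k₀ - 1| * ‖c k₀‖ * r ^ k₀ := by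
          refine mul_le_mul (mul_le_mul_of_nonneg_right h2 (norm_nonneg _)) h3
            zero_le_one (by positivity)
      _ = ‖((pqBe p q n k₀ - 1 : ℝ) : ℂ) * c k₀‖ * r ^ k₀ := by rw [h1]
      _ ≤ supNorm r (fun z => lorentz p q n f z - f z) := hco
  · -- UPPER BOUND
    have hupper : supNorm r (fun z => lorentz p q n f z - f z) ≤ Cup * an := by
      refine aux_supNorm_le (by positivity) ?_
      intro z hzr
      have hzR : ‖z‖ < R := lt_of_le_of_lt hzr hrR
      have hds := diff_hasSum hp hpq hf hR0 hn hzR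
      set u : ℕ → ℝ := fun k => M * an * (‖c k‖ * (q * r / p) ^ k)
        + (if k ≤ n then (0:ℝ) else ‖c k‖ * r ^ k) with hudef
      have hsk : ∀ k : ℕ, (q/p) ^ k * r ^ k = (q * r / p) ^ k := by
        intro k
        rw [← mul_pow]
        congr 1
        field_simp
      have hterm : ∀ k, ‖((pqBe p q n k - 1 : ℝ) : ℂ) * c k * z ^ k‖ ≤ u k := by
        intro k
        rw [norm_mul, norm_mul, norm_pow, Complex.norm_real, Real.norm_eq_abs]
        by_cases hkn : k ≤ n
        · have hB1 : pqBe p q n k = pqB p q n k := if_pos hkn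
          have hBle := pqB_le_one hp hpq hkn
          have hBpos := pqB_pos hp hpq hkn
          have habs : |pqBe p q n k - 1| = 1 - pqB p q n k := by
            rw [hB1, abs_sub_comm, abs_of_nonneg (by linarith)]
          have hbound := pqB_one_sub_le hp hpq hn hkn
          have hzk : ‖z‖ ^ k ≤ r ^ k := pow_le_pow_left₀ (norm_nonneg z) hzr k
          calc |pqBe p q n k - 1| * ‖c k‖ * ‖z‖ ^ k
              ≤ (M * (q/p)^k * an) * ‖c k‖ * r ^ k := by
                refine mul_le_mul (mul_le_mul_of_nonneg_right ?_ (norm_nonneg _)) hzk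
                  (by positivity) (by positivity)
                rw [habs]
                exact hbound
            _ = M * an * (‖c k‖ * ((q/p) ^ k * r ^ k)) := by ring
            _ = M * an * (‖c k‖ * (q * r / p) ^ k) := by rw [hsk k]
            _ ≤ u k := by
                rw [hudef]
                simp only [if_pos hkn, add_zero]
                exact le_refl _
        · have hB1 : pqBe p q n k = 0 := if_neg hkn
          have habs : |pqBe p q n k - 1| = 1 := by rw [hB1]; norm_num
          have hzk : ‖z‖ ^ k ≤ r ^ k := pow_le_pow_left₀ (norm_nonneg z) hzr k
          calc |pqBe p q n k - 1| * ‖c k‖ * ‖z‖ ^ k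
              = ‖c k‖ * ‖z‖ ^ k := by rw [habs, one_mul]
            _ ≤ ‖c k‖ * r ^ k := mul_le_mul_of_nonneg_left hzk (norm_nonneg _)
            _ ≤ u k := by
                rw [hudef]
                simp only [if_neg hkn]
                have : 0 ≤ M * an * (‖c k‖ * (q * r / p) ^ k) := by positivity
                linarith
      have husum : Summable u := (hS1sum.mul_left (M * an)).add hvsum
      have hnormsum : Summable (fun k => ‖((pqBe p q n k - 1 : ℝ) : ℂ) * c k * z ^ k‖) :=
        Summable.of_nonneg_of_le (fun k => norm_nonneg _) hterm husum
      have h6 : ‖lorentz p q n f z - f z‖ ≤ ∑' k, ‖((pqBe p q n k - 1 : ℝ) : ℂ) * c k * z ^ k‖ := by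
        rw [← hds.tsum_eq]
        exact norm_tsum_le_tsum_norm hnormsum
      have h7 : ∑' k, ‖((pqBe p q n k - 1 : ℝ) : ℂ) * c k * z ^ k‖ ≤ ∑' k, u k :=
        Summable.tsum_le_tsum hterm hnormsum husum
      -- split tsum u
      have hsplit : ∑' k, u k = M * an * S₁
          + ∑' k, (if k ≤ n then (0:ℝ) else ‖c k‖ * r ^ k) := by
        rw [hudef, Summable.tsum_add (hS1sum.mul_left (M * an)) hvsum, tsum_mul_left]
      -- tail bound
      have htail : (∑' k, if k ≤ n then (0:ℝ) else ‖c k‖ * r ^ k) ≤ Ctail * an := by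
        set v : ℕ → ℝ := fun k => if k ≤ n then (0:ℝ) else ‖c k‖ * r ^ k with hvdef
        have hv0 : ∑ i ∈ Finset.range (n+1), v i = 0 := by
          refine Finset.sum_eq_zero fun i hi => ?_
          have : i ≤ n := by simpa [Nat.lt_succ_iff] using hi
          simp [hvdef, this]
        have hshift := Summable.sum_add_tsum_nat_add (f := v) (n+1) hvsum
        have hveq : ∑' k, v k = ∑' k, v (k + (n+1)) := by
          rw [← hshift, hv0, zero_add]
        have hwsum : Summable (fun k => v (k + (n+1))) := (summable_nat_add_iff (n+1)).2 hvsum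
        have hwgeo : Summable (fun k : ℕ => K * θ ^ (n+1) * θ ^ k) :=
          (summable_geometric_of_lt_one hθ0 hθ1).mul_left _
        have hwle : ∀ k, v (k + (n+1)) ≤ K * θ ^ (n+1) * θ ^ k := by
          intro k
          have hgt : ¬ (k + (n+1) ≤ n) := by omega
          rw [hvdef]
          simp only [if_neg hgt]
          calc ‖c (k + (n+1))‖ * r ^ (k + (n+1)) ≤ K * θ ^ (k + (n+1)) := hdom r hr0.le _
            _ = K * θ ^ (n+1) * θ ^ k := by rw [pow_add]; ring
        have h8 : ∑' k, v (k + (n+1)) ≤ ∑' k : ℕ, K * θ ^ (n+1) * θ ^ k :=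
          Summable.tsum_le_tsum hwle hwsum hwgeo
        have h9 : ∑' k : ℕ, K * θ ^ (n+1) * θ ^ k = K * θ ^ (n+1) * (1 - θ)⁻¹ := by
          rw [tsum_mul_left, tsum_geometric_of_lt_one hθ0 hθ1]
        have h10 : K * θ ^ (n+1) * (1 - θ)⁻¹ ≤ Ctail * an := by
          have ha : θ ^ (n+1) ≤ θ ^ n := pow_le_pow_of_le_one hθ0 hθ1.le (by omega)
          have hb : θ ^ n ≤ (p/q) ^ n := pow_le_pow_left₀ hθ0 hθpq.le n
          have hc2 : θ ^ (n+1) ≤ an / (q - p) := le_trans (le_trans ha hb) hanlow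
          rw [hCtaildef]
          rw [div_mul_eq_mul_div, le_div_iff₀ (by positivity)]
          have hinv : 0 < (1 - θ)⁻¹ := by positivity
          have := mul_le_mul_of_nonneg_left hc2 hK0
          calc K * θ ^ (n+1) * (1-θ)⁻¹ * ((1-θ) * (q-p))
              = K * θ ^ (n+1) * (q - p) := by field_simp
            _ ≤ K * (an / (q-p)) * (q-p) := by
                refine mul_le_mul_of_nonneg_right ?_ hqp.le
                exact this
            _ = K * an := by field_simp
        rw [hveq]
        linarith
      calc ‖lorentz p q n f z - f z‖ ≤ ∑' k, u k := le_trans h6 h7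
        _ = M * an * S₁ + ∑' k, (if k ≤ n then (0:ℝ) else ‖c k‖ * r ^ k) := hsplit
        _ ≤ M * an * S₁ + Ctail * an := by linarith
        _ = Cup * an := by rw [hCupdef]; ring
    calc supNorm r (fun z => lorentz p q n f z - f z) ≤ Cup * an := hupper
      _ ≤ max Cup c₀ * an := mul_le_mul_of_nonneg_right (le_max_left _ _) han0.le
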